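/- Let G be a finite 2-group and let V be a central elementary abelian subgroup of G of rank k. Then there exist an integer m ≥ 0 and a continuous action of G on the product (S^m)^k of k copies of the m-sphere such that the restriction of the action to V is free. -/

import Mathlib

noncomputable section

/-- The unit sphere `S^m` in `ℝ^{m+1}`. -/
abbrev Sph (m : ℕ) : Type := Metric.sphere (0 : EuclideanSpace ℝ (Fin (m + 1))) 1

/-- The antipodal relation on the sphere `S^m`. -/
def antipodal (m : ℕ) (x y : Sph m) : Prop :=
  (y : EuclideanSpace ℝ (Fin (m + 1))) = (x : EuclideanSpace ℝ (Fin (m + 1))) ∨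
    (y : EuclideanSpace ℝ (Fin (m + 1))) = -(x : EuclideanSpace ℝ (Fin (m + 1)))

/-- Real projective `m`-space: the quotient of `S^m` by the antipodal map,
with the quotient topology. -/
abbrev RP (m : ℕ) : Type := Quot (antipodal m)


private lemma zmod2_cases : ∀ a : ZMod 2, a = 0 ∨ a = 1 := by decide

private lemma zmod2_add_self : (1 + 1 : ZMod 2) = 0 := by decide

private lemma zmod2_one_ne : (1 : ZMod 2) ≠ 0 := by decide

theorem stmt13 (G : Type) [Group G] [Finite G] (h2 : IsPGroup 2 G)
    (V : Subgroup G) (hVcentral : V ≤ Subgroup.center G)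
    (hV2 : ∀ v ∈ V, v * v = 1)
    (k : ℕ) (hVk : Nat.card V = 2 ^ k) :
    ∃ (m : ℕ) (ρ : G → (Fin k → Sph m) → (Fin k → Sph m)),
      (∀ x, ρ 1 x = x) ∧
      (∀ g h x, ρ (g * h) x = ρ g (ρ h x)) ∧
      (∀ g, Continuous (ρ g)) ∧
      -- the restriction of the action to V is free
      (∀ v ∈ V, ∀ x, ρ v x = x → v = 1) := by
  
  classical
  -- V is commutative and an elementary abelian 2-group, hence a ZMod 2 vector space
  letI : CommGroup V :=
    { (inferInstance : Group V) with
      mul_comm := fun a b => Subtype.ext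
        ((Subgroup.mem_center_iff.mp (hVcentral a.2) b.1).symm) }
  letI : Module (ZMod 2) (Additive V) := AddCommGroup.zmodModule (fun x => by
    show 2 • x = 0
    rw [two_nsmul]
    exact Subtype.ext (hV2 _ x.toMul.2))
  haveI : Fact (Nat.Prime 2) := ⟨by norm_num⟩
  haveI : Module.Finite (ZMod 2) (Additive V) := Module.Finite.of_finite
  haveI : Fintype (Additive V) := Fintype.ofFinite _
  have hcard : Fintype.card (Additive V) = 2 ^ Module.finrank (ZMod 2) (Additive V) := by
    have := @Module.card_eq_pow_finrank (ZMod 2) (Additive V) _ _ _ _ _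
    simpa [ZMod.card] using this
  have hrank : Module.finrank (ZMod 2) (Additive V) = k := by
    have h1 : Fintype.card (Additive V) = 2 ^ k := by
      rw [← hVk]
      exact (Nat.card_eq_fintype_card (α := Additive V)).symm ▸ rfl
    exact Nat.pow_right_injective (le_refl 2) (hcard.symm.trans h1)
  let b : Module.Basis (Fin k) (ZMod 2) (Additive V) := Module.finBasisOfFinrankEq _ _ hrank
  -- signs
  let sgn : ZMod 2 → ℝ := fun a => if a = 0 then 1 else -1
  have h01 : ∀ a : ZMod 2, a = 0 ∨ a = 1 := zmod2_cases
  have sgn_add : ∀ a c : ZMod 2, sgn (a + c) = sgn a * sgn c := by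
    intro a c
    have h11 := zmod2_add_self
    have h10 := zmod2_one_ne
    rcases h01 a with ha | ha <;> rcases h01 c with hc | hc <;>
      subst ha <;> subst hc <;> simp [sgn, h11, h10]
  have sgn_sq : ∀ a : ZMod 2, sgn a * sgn a = 1 := by
    intro a; by_cases h : a = 0 <;> simp [sgn, h]
  -- characters of V extended to G
  let c : Fin k → G → ℝ := fun i g =>
    if h : g ∈ V then sgn (b.coord i (Additive.ofMul (⟨g, h⟩ : V))) else 1
  have c_one : ∀ i, c i 1 = 1 := by
    intro i
    have : ((⟨(1 : G), one_mem V⟩ : V)) = 1 := rfl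
    simp [c, this, sgn]
  have c_mul : ∀ i, ∀ a ∈ V, ∀ a' ∈ V, c i (a * a') = c i a * c i a' := by
    intro i a ha a' ha'
    have hm : a * a' ∈ V := mul_mem ha ha'
    have : (⟨a * a', hm⟩ : V) = ⟨a, ha⟩ * ⟨a', ha'⟩ := rfl
    simp only [c, dif_pos ha, dif_pos ha', dif_pos hm, this, ofMul_mul, map_add]
    exact sgn_add _ _
  have sgn_abs : ∀ a : ZMod 2, |sgn a| = 1 := by
    intro a; by_cases h : a = 0 <;> simp [sgn, h]
  have c_abs : ∀ i g, |c i g| = 1 := by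
    intro i g
    by_cases h : g ∈ V
    · simp only [c, dif_pos h]; exact sgn_abs _
    · simp [c, dif_neg h]
  -- the quotient
  set Q := (G ⧸ V) with hQ
  haveI : Finite Q := inferInstance
  have hQpos : 0 < Nat.card Q := Nat.card_pos
  refine ⟨Nat.card Q - 1, ?_⟩
  set m := Nat.card Q - 1 with hm
  have hQcard : Nat.card Q = m + 1 := by omega
  let e : Q ≃ Fin (m + 1) := Finite.equivFinOfCardEq hQcard
  let s : Q → G := fun q => q.out
  have hs : ∀ q : Q, (s q : Q) = q := fun q => QuotientGroup.out_eq' q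
  let w : G → Q → G := fun g q => (s (g • q))⁻¹ * g * s q
  have hwV : ∀ g q, w g q ∈ V := by
    intro g q
    have h1 : ((s (g • q) : G) : Q) = g • q := hs _
    have h2 : ((g * s q : G) : Q) = g • q := by
      conv_rhs => rw [← hs q]
      rfl
    have : ((s (g • q) : G) : Q) = ((g * s q : G) : Q) := h1.trans h2.symm
    have := QuotientGroup.eq.mp this
    simpa [w, mul_assoc] using this
  have hw_cocycle : ∀ a a' q, w (a * a') q = w a (a' • q) * w a' q := by
    intro a a' q
    simp only [w, mul_smul]
    group
  have hw_one : ∀ q, w 1 q = 1 := by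
    intro q; simp [w]
  have hw_cent : ∀ v ∈ V, ∀ q : Q, v • q = q ∧ w v q = v := by
    intro v hv q
    have hcomm : ∀ g : G, g * v = v * g := Subgroup.mem_center_iff.mp (hVcentral hv)
    have h3 : ((s q * v : G) : Q) = ((s q : G) : Q) :=
      QuotientGroup.eq.mpr (by simpa using inv_mem hv)
    have hsmul : v • q = q := by
      calc v • q = ((v * s q : G) : Q) := by
              conv_lhs => rw [← hs q]
              rfl
        _ = ((s q * v : G) : Q) := by rw [hcomm (s q)]
        _ = ((s q : G) : Q) := h3
        _ = q := hs q
    refine ⟨hsmul, ?_⟩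
    show (s (v • q))⁻¹ * v * s q = v
    rw [hsmul, mul_assoc, ← hcomm (s q), inv_mul_cancel_left]
  -- the (signed permutation) linear maps
  let A : G → Fin k → (EuclideanSpace ℝ (Fin (m + 1)) →ₗ[ℝ] EuclideanSpace ℝ (Fin (m + 1))) :=
    fun g i =>
    { toFun := fun f => WithLp.toLp 2 (fun j => c i (w g⁻¹ (e.symm j)) * f (e (g⁻¹ • e.symm j)))
      map_add' := by
        intro f f'
        ext j
        show c i (w g⁻¹ (e.symm j)) * (f (e (g⁻¹ • e.symm j)) + f' (e (g⁻¹ • e.symm j)))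
            = c i (w g⁻¹ (e.symm j)) * f (e (g⁻¹ • e.symm j))
              + c i (w g⁻¹ (e.symm j)) * f' (e (g⁻¹ • e.symm j))
        ring
      map_smul' := by
        intro r f
        ext j
        show c i (w g⁻¹ (e.symm j)) * (r * f (e (g⁻¹ • e.symm j)))
            = r * (c i (w g⁻¹ (e.symm j)) * f (e (g⁻¹ • e.symm j)))
        ring }
  have hA_apply : ∀ g i f j, A g i f j = c i (w g⁻¹ (e.symm j)) * f (e (g⁻¹ • e.symm j)) :=
    fun _ _ _ _ => rfl
  have hA_norm : ∀ g i (f : EuclideanSpace ℝ (Fin (m + 1))), ‖A g i f‖ = ‖f‖ := by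
    intro g i f
    rw [EuclideanSpace.norm_eq, EuclideanSpace.norm_eq]
    congr 1
    have : ∀ j, ‖A g i f j‖ ^ 2 = ‖f (e (g⁻¹ • e.symm j))‖ ^ 2 := by
      intro j
      rw [hA_apply, norm_mul, Real.norm_eq_abs, c_abs, one_mul]
    rw [Finset.sum_congr rfl (fun j _ => this j)]
    let σ : Fin (m + 1) ≃ Fin (m + 1) :=
      e.symm.trans ((MulAction.toPerm g⁻¹).trans e)
    exact Equiv.sum_comp σ (fun j => ‖f j‖ ^ 2)
  have hA_mem : ∀ g i (x : Sph m), A g i (x : EuclideanSpace ℝ (Fin (m + 1))) ∈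
      Metric.sphere (0 : EuclideanSpace ℝ (Fin (m + 1))) 1 := by
    intro g i x
    rw [mem_sphere_zero_iff_norm, hA_norm]
    exact mem_sphere_zero_iff_norm.mp x.2
  refine ⟨fun g x i => ⟨A g i (x i), hA_mem g i (x i)⟩, ?_, ?_, ?_, ?_⟩
  · -- identity
    intro x
    funext i
    apply Subtype.ext
    ext j
    show A (1 : G) i ((x i : EuclideanSpace ℝ (Fin (m + 1)))) j
        = (x i : EuclideanSpace ℝ (Fin (m + 1))) j
    rw [hA_apply, inv_one, hw_one, c_one, one_mul, one_smul, Equiv.apply_symm_apply]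
  · -- composition
    intro g h x
    funext i
    apply Subtype.ext
    ext j
    show A (g * h) i ((x i : EuclideanSpace ℝ (Fin (m + 1)))) j
        = A g i (A h i ((x i : EuclideanSpace ℝ (Fin (m + 1))))) j
    rw [hA_apply, hA_apply, hA_apply]
    rw [mul_inv_rev, hw_cocycle h⁻¹ g⁻¹ (e.symm j),
        c_mul i _ (hwV _ _) _ (hwV _ _)]
    rw [Equiv.symm_apply_apply]
    rw [mul_smul]
    ring
  · -- continuity
    intro g
    apply continuous_pi
    intro i
    apply Continuous.subtype_mk
    exact (A g i).continuous_of_finiteDimensional.comp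
      (continuous_subtype_val.comp (continuous_apply i))
  · -- freeness
    intro v hv x hx
    by_contra hne
    -- find a coordinate where v is nontrivial
    have hnz : Additive.ofMul (⟨v, hv⟩ : V) ≠ 0 := by
      intro h0
      exact hne (congrArg Subtype.val (show (⟨v, hv⟩ : V) = 1 from h0))
    obtain ⟨i, hi⟩ : ∃ i, b.coord i (Additive.ofMul (⟨v, hv⟩ : V)) ≠ 0 := by
      by_contra hall
      push_neg at hall
      apply hnz
      have : b.repr (Additive.ofMul (⟨v, hv⟩ : V)) = 0 := by
        ext i; exact hall i
      simpa using (b.repr.map_eq_zero_iff).mp this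
    have hvinv : v⁻¹ = v := inv_eq_of_mul_eq_one_left (hV2 v hv)
    have hcv : c i v = -1 := by
      simp only [c, dif_pos hv, sgn, if_neg hi]
    have key : ∀ j, A v i (x i) j = -1 * (x i : EuclideanSpace ℝ (Fin (m + 1))) j := by
      intro j
      rw [hA_apply, hvinv, (hw_cent v hv (e.symm j)).2, hcv,
          (hw_cent v hv (e.symm j)).1, Equiv.apply_symm_apply]
    have hxi : A v i ((x i : EuclideanSpace ℝ (Fin (m + 1))))
        = (x i : EuclideanSpace ℝ (Fin (m + 1))) :=
      congrArg Subtype.val (congrFun hx i)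
    have hzero : (x i : EuclideanSpace ℝ (Fin (m + 1))) = 0 := by
      ext j
      have h5 : A v i ((x i : EuclideanSpace ℝ (Fin (m + 1)))) j
          = (x i : EuclideanSpace ℝ (Fin (m + 1))) j := by rw [hxi]
      rw [key j] at h5
      show (x i : EuclideanSpace ℝ (Fin (m + 1))) j = 0
      linarith
    have := mem_sphere_zero_iff_norm.mp (x i).2
    rw [hzero, norm_zero] at this
    norm_num at this
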